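/- Let G be a loopless directed graph without multiple arcs on vertex set [n], let π be any permutation of [n], and let v be any vertex. If exactly j in-neighbors of v appear before v in π, then the winner y_n of the permutation mechanism applied to G and π has in-degree at least j. -/

import Mathlib

/- Directed graphs on vertex set `[n]` (modelled as `Fin (n+1)`, so the vertex set is
nonempty) are given by a Boolean arc relation `A`; looplessness is `∀ v, A v v = false`,
and absence of multiple arcs is automatic. -/

/-- The number of in-neighbors of `v` (w.r.t. the arc relation `A`) lying in the set `S`. -/
def inNbrs {m : ℕ} (A : Fin m → Fin m → Bool) (S : Finset (Fin m)) (v : Fin m) : ℕ :=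
  (S.filter fun u => A u v).card

/-- The in-degree `d⁻(v)` of a vertex `v`. -/
def inDeg {m : ℕ} (A : Fin m → Fin m → Bool) (v : Fin m) : ℕ :=
  inNbrs A Finset.univ v

/-- The maximum in-degree `Δ⁻(G)`. -/
def maxInDeg {m : ℕ} (A : Fin m → Fin m → Bool) : ℕ :=
  Finset.univ.sup (inDeg A)

/-- `Π_k`: the set of the first `k` vertices in the permutation `π`. -/
def firstK {m : ℕ} (π : Equiv.Perm (Fin m)) (k : ℕ) : Finset (Fin m) :=
  Finset.univ.filter fun v => (π.symm v : ℕ) < k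

/-- The provisional leader of the permutation mechanism after the vertices in
positions `0, 1, …, i` (0-indexed) have been examined.  `leader A π 0 = π 0` is `y₁`,
and the new vertex becomes leader when it has at least as many in-neighbors in
`Π_{i+1} ∖ {y}` as the current leader `y`. -/
def leader {n : ℕ} (A : Fin (n+1) → Fin (n+1) → Bool) (π : Equiv.Perm (Fin (n+1))) :
    ℕ → Fin (n+1)
  | 0 => π 0
  | i + 1 =>
      let y := leader A π i
      if h : i + 1 < n + 1 then
        let c := π ⟨i + 1, h⟩
        let S := (firstK π (i + 1)).erase y
        if inNbrs A S y ≤ inNbrs A S c then c else y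
      else y

/-- The winner `y_n` of the permutation mechanism. -/
def winner {n : ℕ} (A : Fin (n+1) → Fin (n+1) → Bool) (π : Equiv.Perm (Fin (n+1))) :
    Fin (n+1) :=
  leader A π n


lemma inNbrs_mono {m : ℕ} (A : Fin m → Fin m → Bool) {S T : Finset (Fin m)}
    (h : S ⊆ T) (v : Fin m) : inNbrs A S v ≤ inNbrs A T v :=
  Finset.card_le_card (Finset.filter_subset_filter _ h)

lemma mem_firstK {m : ℕ} (π : Equiv.Perm (Fin m)) (k : ℕ) (x : Fin m) :
    x ∈ firstK π k ↔ (π.symm x : ℕ) < k := by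
  simp [firstK]

lemma firstK_mono {m : ℕ} (π : Equiv.Perm (Fin m)) {k l : ℕ} (h : k ≤ l) :
    firstK π k ⊆ firstK π l := by
  intro x hx
  rw [mem_firstK] at *
  omega

/-- The leader's score (its in-neighbors among the examined vertices other than itself)
is nondecreasing. -/
lemma leaderScore_step (n : ℕ) (A : Fin (n+1) → Fin (n+1) → Bool)
    (π : Equiv.Perm (Fin (n+1))) (i : ℕ) :
    inNbrs A ((firstK π (i+1)).erase (leader A π i)) (leader A π i)
      ≤ inNbrs A ((firstK π (i+2)).erase (leader A π (i+1))) (leader A π (i+1)) := by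
  have hunf : leader A π (i+1) =
      (let y := leader A π i
       if h : i + 1 < n + 1 then
        let c := π ⟨i + 1, h⟩
        let S := (firstK π (i + 1)).erase y
        if inNbrs A S y ≤ inNbrs A S c then c else y
       else y) := rfl
  set y := leader A π i with hy
  by_cases h : i + 1 < n + 1
  · set c := π ⟨i + 1, h⟩ with hc
    have hcnot : (π.symm c : ℕ) = i + 1 := by rw [hc, Equiv.symm_apply_apply]
    by_cases hcase : inNbrs A ((firstK π (i+1)).erase y) y
        ≤ inNbrs A ((firstK π (i+1)).erase y) c
    · have hl : leader A π (i+1) = c := by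
        rw [hunf]; simp only [dif_pos h, if_pos hcase]
        exact if_pos hcase
      rw [hl]
      refine hcase.trans (inNbrs_mono A ?_ c)
      intro x hx
      have hx1 := Finset.mem_of_mem_erase hx
      rw [mem_firstK] at hx1
      rw [Finset.mem_erase, mem_firstK]
      constructor
      · intro hxc; rw [hxc] at hx1; omega
      · omega
    · have hl : leader A π (i+1) = y := by
        rw [hunf]; simp only [dif_pos h, if_neg hcase]
        exact if_neg hcase
      rw [hl]
      exact inNbrs_mono A (Finset.erase_subset_erase _ (firstK_mono π (by omega))) y
  · have hl : leader A π (i+1) = y := by rw [hunf]; simp only [dif_neg h]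
    rw [hl]
    exact inNbrs_mono A (Finset.erase_subset_erase _ (firstK_mono π (by omega))) y

lemma leaderScore_le (n : ℕ) (A : Fin (n+1) → Fin (n+1) → Bool)
    (π : Equiv.Perm (Fin (n+1))) (k : ℕ) :
    ∀ d : ℕ,
    inNbrs A ((firstK π (k+1)).erase (leader A π k)) (leader A π k)
      ≤ inNbrs A ((firstK π (k+d+1)).erase (leader A π (k+d))) (leader A π (k+d))
  | 0 => le_refl _
  | d + 1 => (leaderScore_le n A π k d).trans (leaderScore_step n A π (k+d))

/-- If exactly `j` in-neighbors of `v` appear before `v` in the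
permutation `π`, then the winner of the permutation mechanism applied to `G` and `π`
has in-degree at least `j`. -/
theorem permutation_mechanism_winner_deg_ge (n : ℕ) (A : Fin (n+1) → Fin (n+1) → Bool)
    (hloopless : ∀ v, A v v = false) (π : Equiv.Perm (Fin (n+1))) (v : Fin (n+1)) (j : ℕ)
    (hj : inNbrs A (Finset.univ.filter fun u => (π.symm u : ℕ) < (π.symm v : ℕ)) v = j) :
    j ≤ inDeg A (winner A π) := by
  set k := (π.symm v : ℕ) with hk
  have hj' : inNbrs A (firstK π k) v = j := hj
  have hkn : k ≤ n := by have := (π.symm v).isLt; omega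
  -- Base: at step `k`, the leader's score is at least `j`.
  have hbase : j ≤ inNbrs A ((firstK π (k+1)).erase (leader A π k)) (leader A π k) := by
    rcases Nat.eq_zero_or_pos k with hk0 | hkpos
    · have : j = 0 := by
        rw [← hj']
        rw [hk0]
        have : firstK π 0 = ∅ := by
          ext x; simp [mem_firstK]
        rw [this]
        simp [inNbrs]
      omega
    · obtain ⟨m, hm⟩ : ∃ m, k = m + 1 := ⟨k - 1, by omega⟩
      have h : m + 1 < n + 1 := by omega
      have hunf : leader A π (m+1) =
          (let y := leader A π m
           if h : m + 1 < n + 1 then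
            let c := π ⟨m + 1, h⟩
            let S := (firstK π (m + 1)).erase y
            if inNbrs A S y ≤ inNbrs A S c then c else y
           else y) := rfl
      set y := leader A π m with hy
      have hcv : π ⟨m + 1, h⟩ = v := by
        have : (⟨m + 1, h⟩ : Fin (n+1)) = π.symm v := by
          apply Fin.ext; simp; omega
        rw [this, Equiv.apply_symm_apply]
      have hvk : (π.symm v : ℕ) = k := rfl
      by_cases hcase : inNbrs A ((firstK π (m+1)).erase y) y
          ≤ inNbrs A ((firstK π (m+1)).erase y) (π ⟨m + 1, h⟩)
      · have hl : leader A π (m+1) = v := by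
          rw [hunf]; simp only [dif_pos h, if_pos hcase]; exact hcv
        rw [hm, hl]
        rw [← hj']
        refine inNbrs_mono A ?_ v
        intro x hx
        rw [mem_firstK] at hx
        rw [Finset.mem_erase, mem_firstK]
        constructor
        · intro hxv; rw [hxv] at hx; omega
        · omega
      · have hl : leader A π (m+1) = y := by
          rw [hunf]; simp only [dif_pos h, if_neg hcase]
        rw [hm, hl]
        rw [hcv] at hcase
        push_neg at hcase
        -- `v`'s score in `(firstK π k).erase y` is at least `j - 1`
        have h1 : j - 1 ≤ inNbrs A ((firstK π (m+1)).erase y) v := by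
          have : inNbrs A ((firstK π (m+1)).erase y) v
              = (((firstK π (m+1)).filter (fun u => A u v)).erase y).card := by
            unfold inNbrs
            rw [Finset.filter_erase]
          rw [this]
          have h2 := Finset.pred_card_le_card_erase
            (s := (firstK π (m+1)).filter (fun u => A u v)) (a := y)
          have h3 : ((firstK π (m+1)).filter (fun u => A u v)).card = j := by
            rw [← hj', hm]; rfl
          omega
        have h4 : j ≤ inNbrs A ((firstK π (m+1)).erase y) y := by omega
        refine h4.trans (inNbrs_mono A ?_ y)
        exact Finset.erase_subset_erase _ (firstK_mono π (by omega))
  have hstep := leaderScore_le n A π k (n - k)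
  have hkn' : k + (n - k) = n := by omega
  rw [hkn'] at hstep
  have hfin : inNbrs A ((firstK π (n+1)).erase (leader A π n)) (leader A π n)
      ≤ inDeg A (leader A π n) :=
    inNbrs_mono A (Finset.Subset.trans (Finset.erase_subset _ _) (Finset.subset_univ _)) _
  calc j ≤ _ := hbase
    _ ≤ _ := hstep
    _ ≤ _ := hfin
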